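/- If u₁ and u₂ are twice continuously differentiable solutions of -u'' + V(x)u = 0 on an interval (a,b) with Wronskian u₁u₂' - u₂u₁' = 1, and u₁(x)u₂(x) ≠ 0 on (a,b), then Z(x) := (u₁(x)u₂(x))^{1/2} satisfies the diagonal differential equation -Z'' + V(x)Z - 1/(4Z³) = 0 on (a,b). -/

import Mathlib

theorem bohl_diagonal_equation
    (V u₁ u₂ : ℝ → ℝ) (a b : ℝ)
    (hV : ContinuousOn V (Set.Ioo a b))
    (h1 : ContDiffOn ℝ 2 u₁ (Set.Ioo a b))
    (h2 : ContDiffOn ℝ 2 u₂ (Set.Ioo a b))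
    (hode1 : ∀ x ∈ Set.Ioo a b, deriv (deriv u₁) x = V x * u₁ x)
    (hode2 : ∀ x ∈ Set.Ioo a b, deriv (deriv u₂) x = V x * u₂ x)
    (hW : ∀ x ∈ Set.Ioo a b, u₁ x * deriv u₂ x - u₂ x * deriv u₁ x = 1)
    (hpos : ∀ x ∈ Set.Ioo a b, 0 < u₁ x * u₂ x)
    (Z : ℝ → ℝ) (hZ : ∀ x, Z x = Real.sqrt (u₁ x * u₂ x)) :
    ∀ x ∈ Set.Ioo a b,
      -(deriv (deriv Z) x) + V x * Z x - 1 / (4 * (Z x) ^ 3) = 0 := by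
  have hopen : IsOpen (Set.Ioo a b) := isOpen_Ioo
  have h1d : ∀ y ∈ Set.Ioo a b, DifferentiableAt ℝ u₁ y := fun y hy =>
    (h1.differentiableOn two_ne_zero).differentiableAt (hopen.mem_nhds hy)
  have h2d : ∀ y ∈ Set.Ioo a b, DifferentiableAt ℝ u₂ y := fun y hy =>
    (h2.differentiableOn two_ne_zero).differentiableAt (hopen.mem_nhds hy)
  have h1d' : ∀ y ∈ Set.Ioo a b, DifferentiableAt ℝ (deriv u₁) y := fun y hy =>
    (((h1.deriv_of_isOpen hopen (m := 1) (by norm_num)).differentiableOn one_ne_zero).differentiableAt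
      (hopen.mem_nhds hy))
  have h2d' : ∀ y ∈ Set.Ioo a b, DifferentiableAt ℝ (deriv u₂) y := fun y hy =>
    (((h2.deriv_of_isOpen hopen (m := 1) (by norm_num)).differentiableOn one_ne_zero).differentiableAt
      (hopen.mem_nhds hy))
  have hZpos : ∀ y ∈ Set.Ioo a b, 0 < Z y := fun y hy => by
    rw [hZ]; exact Real.sqrt_pos.2 (hpos y hy)
  set g : ℝ → ℝ := fun y => deriv u₁ y * u₂ y + u₁ y * deriv u₂ y with hg
  have hZder : ∀ y ∈ Set.Ioo a b, HasDerivAt Z (g y / (2 * Z y)) y := by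
    intro y hy
    have hP : HasDerivAt (fun t => u₁ t * u₂ t) (g y) y :=
      ((h1d y hy).hasDerivAt).mul ((h2d y hy).hasDerivAt)
    have hs := (Real.hasDerivAt_sqrt (ne_of_gt (hpos y hy))).comp y hP
    have hfun : Z = fun t => Real.sqrt (u₁ t * u₂ t) := funext hZ
    rw [hfun]
    refine HasDerivAt.congr_deriv hs ?_; symm
    show g y / (2 * Real.sqrt (u₁ y * u₂ y)) = _
    have : Real.sqrt (u₁ y * u₂ y) ≠ 0 := ne_of_gt (Real.sqrt_pos.2 (hpos y hy))
    field_simp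
  intro x hx
  have hderivZ : deriv (deriv Z) x = deriv (fun y => g y / (2 * Z y)) x := by
    apply Filter.EventuallyEq.deriv_eq
    filter_upwards [hopen.mem_nhds hx] with y hy
    exact (hZder y hy).deriv
  have hgder : HasDerivAt g
      (deriv (deriv u₁) x * u₂ x + deriv u₁ x * deriv u₂ x +
        (deriv u₁ x * deriv u₂ x + u₁ x * deriv (deriv u₂) x)) x :=
    (((h1d' x hx).hasDerivAt).mul ((h2d x hx).hasDerivAt)).add
      (((h1d x hx).hasDerivAt).mul ((h2d' x hx).hasDerivAt))
  have hZne : 2 * Z x ≠ 0 := by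
    have := hZpos x hx; positivity
  have hFder : HasDerivAt (fun y => g y / (2 * Z y))
      (((deriv (deriv u₁) x * u₂ x + deriv u₁ x * deriv u₂ x +
        (deriv u₁ x * deriv u₂ x + u₁ x * deriv (deriv u₂) x)) * (2 * Z x)
        - g x * (0 * Z x + (2:ℝ) * (g x / (2 * Z x)))) / (2 * Z x) ^ 2) x :=
    hgder.div ((hasDerivAt_const x (2:ℝ)).mul (hZder x hx)) hZne
  rw [hderivZ, hFder.deriv, hode1 x hx, hode2 x hx]
  have hsq : Z x ^ 2 = u₁ x * u₂ x := by
    rw [hZ]; exact Real.sq_sqrt (le_of_lt (hpos x hx))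
  have hWx := hW x hx
  have hZx := hZpos x hx
  set A := u₁ x; set B := u₂ x; set A' := deriv u₁ x; set B' := deriv u₂ x
  set s := Z x
  have hgx : g x = A' * B + A * B' := rfl
  rw [hgx]
  have hs : s ≠ 0 := ne_of_gt hZx
  field_simp
  linear_combination (16 * V x * s ^ 2 - 16 * A' * B') * hsq +
    4 * (A * B' - B * A' + 1) * hWx
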